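/- Let L ≥ 2, and suppose v_l = w_l = γ_l > 0 may vary with l but satisfy γ_min ≤ γ_l ≤ γ_max. Then the Sub-LN depth factor (Σ_{l=1}^{L} 2)/(Σ_{n=1}^{L} γ_n²) + (1/Σ_{n=1}^{L} γ_n²)·Σ_{l=1}^{L} Σ_{k=2}^{L} 2·γ_k²/(Σ_{n=1}^{k−1} γ_n²) is at most (2/γ_min²)·(1 + (γ_max²/γ_min²)·(1 + log(L−1))). -/

import Mathlib

open Finset

lemma harm2_bound (L : ℕ) (hL : 2 ≤ L) :
    ∑ k ∈ Icc 2 L, (1:ℝ)/((k-1 : ℕ):ℝ) ≤ 1 + Real.log ((L:ℝ)-1) := by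
  induction L, hL using Nat.le_induction with
  | base => norm_num
  | succ n hn ih =>
    rw [Finset.sum_Icc_succ_top (by omega : 2 ≤ n+1)]
    have hn2 : (2:ℝ) ≤ (n:ℝ) := by exact_mod_cast hn
    have h1 : ((n+1-1:ℕ):ℝ) = (n:ℝ) := by push_cast; ring
    have hlog : (1:ℝ)/n ≤ Real.log n - Real.log ((n:ℝ)-1) := by
      have hfrac : (0:ℝ) < ((n:ℝ)-1)/n := div_pos (by linarith) (by linarith)
      have h := Real.log_le_sub_one_of_pos hfrac
      rw [Real.log_div (by linarith) (by linarith)] at h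
      have heq : ((n:ℝ)-1)/(n:ℝ) - 1 = -(1/n) := by field_simp; ring
      linarith
    have hgoal : ((n+1:ℕ):ℝ) - 1 = (n:ℝ) := by push_cast; ring
    rw [h1, hgoal]
    linarith

theorem subln_depth_factor_robust (L : ℕ) (hL : 2 ≤ L) (γ : ℕ → ℝ)
    (γmin γmax : ℝ) (hγmin : 0 < γmin)
    (hγ : ∀ l ∈ Finset.Icc 1 L, γmin ≤ γ l ∧ γ l ≤ γmax) :
    (∑ _l ∈ Finset.Icc 1 L, (2 : ℝ)) / (∑ n ∈ Finset.Icc 1 L, (γ n) ^ 2)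
      + (1 / ∑ n ∈ Finset.Icc 1 L, (γ n) ^ 2) *
        ∑ _l ∈ Finset.Icc 1 L, ∑ k ∈ Finset.Icc 2 L,
          2 * (γ k) ^ 2 / (∑ n ∈ Finset.Icc 1 (k - 1), (γ n) ^ 2) ≤
    (2 / γmin ^ 2) * (1 + (γmax ^ 2 / γmin ^ 2) * (1 + Real.log ((L : ℝ) - 1))) := by
  set S := ∑ n ∈ Icc 1 L, (γ n)^2 with hSdef
  have hterm : ∀ n ∈ Icc 1 L, γmin^2 ≤ (γ n)^2 := fun n hn =>
    pow_le_pow_left₀ hγmin.le (hγ n hn).1 2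
  have hcard : (Icc 1 L).card = L := by rw [Nat.card_Icc]; omega
  have hS : (L:ℝ) * γmin^2 ≤ S := by
    calc (L:ℝ)*γmin^2 = ∑ _n ∈ Icc 1 L, γmin^2 := by rw [sum_const, hcard]; ring
      _ ≤ S := Finset.sum_le_sum hterm
  have hLpos : (0:ℝ) < L := by exact_mod_cast (by omega : 0 < L)
  have hSpos : 0 < S := lt_of_lt_of_le (by positivity) hS
  have hmm : γmin ≤ γmax := le_trans (hγ 1 (by simp; omega)).1 (hγ 1 (by simp; omega)).2
  have hmaxpos : 0 < γmax := lt_of_lt_of_le hγmin hmm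
  have hlogpos : 0 ≤ Real.log ((L:ℝ)-1) := by
    apply Real.log_nonneg
    have : (2:ℝ) ≤ L := by exact_mod_cast hL
    linarith
  -- first term
  have hfirst : (∑ _l ∈ Icc 1 L, (2:ℝ)) / S ≤ 2 / γmin^2 := by
    rw [sum_const, hcard, nsmul_eq_mul]
    rw [div_le_div_iff₀ hSpos (by positivity)]
    nlinarith [hS]
  -- inner sum bound
  have hinner : ∑ k ∈ Icc 2 L, 2 * (γ k)^2 / (∑ n ∈ Icc 1 (k-1), (γ n)^2)
      ≤ (2*γmax^2/γmin^2) * (1 + Real.log ((L:ℝ)-1)) := by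
    have step : ∑ k ∈ Icc 2 L, 2 * (γ k)^2 / (∑ n ∈ Icc 1 (k-1), (γ n)^2)
        ≤ ∑ k ∈ Icc 2 L, (2*γmax^2/γmin^2) * ((1:ℝ)/((k-1:ℕ):ℝ)) := by
      apply Finset.sum_le_sum
      intro k hk
      rw [Finset.mem_Icc] at hk
      have hk1 : 1 ≤ k - 1 := by omega
      have hkpos : (0:ℝ) < ((k-1:ℕ):ℝ) := by exact_mod_cast (by omega : 0 < k - 1)
      have hD : ((k-1:ℕ):ℝ) * γmin^2 ≤ ∑ n ∈ Icc 1 (k-1), (γ n)^2 := by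
        calc ((k-1:ℕ):ℝ)*γmin^2 = ∑ _n ∈ Icc 1 (k-1), γmin^2 := by
              rw [sum_const, Nat.card_Icc]
              have : k - 1 + 1 - 1 = k - 1 := by omega
              rw [this]; ring
          _ ≤ _ := Finset.sum_le_sum (fun n hn => hterm n (by
              rw [Finset.mem_Icc] at hn ⊢; omega))
      have hDpos : (0:ℝ) < ∑ n ∈ Icc 1 (k-1), (γ n)^2 := lt_of_lt_of_le (by positivity) hD
      have hnum : 2 * (γ k)^2 ≤ 2 * γmax^2 := by
        have hk' : k ∈ Icc 1 L := by rw [Finset.mem_Icc]; omega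
        have := pow_le_pow_left₀ (le_trans hγmin.le (hγ k hk').1) (hγ k hk').2 2
        linarith
      calc 2 * (γ k)^2 / (∑ n ∈ Icc 1 (k-1), (γ n)^2)
          ≤ 2 * γmax^2 / (((k-1:ℕ):ℝ) * γmin^2) := by
            apply div_le_div₀ (by positivity) hnum (by positivity) hD
        _ = (2*γmax^2/γmin^2) * ((1:ℝ)/((k-1:ℕ):ℝ)) := by field_simp
    calc _ ≤ _ := step
      _ = (2*γmax^2/γmin^2) * ∑ k ∈ Icc 2 L, (1:ℝ)/((k-1:ℕ):ℝ) := by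
          rw [Finset.mul_sum]
      _ ≤ (2*γmax^2/γmin^2) * (1 + Real.log ((L:ℝ)-1)) := by
          apply mul_le_mul_of_nonneg_left (harm2_bound L hL) (by positivity)
  -- second term
  have hsecond : (1/S) * ∑ _l ∈ Icc 1 L, ∑ k ∈ Icc 2 L,
      2 * (γ k)^2 / (∑ n ∈ Icc 1 (k-1), (γ n)^2)
      ≤ (1/γmin^2) * ((2*γmax^2/γmin^2) * (1 + Real.log ((L:ℝ)-1))) := by
    rw [sum_const, hcard, nsmul_eq_mul]
    have hLS : (L:ℝ)/S ≤ 1/γmin^2 := by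
      rw [div_le_div_iff₀ hSpos (by positivity)]
      nlinarith [hS]
    have h1 : (1/S) * ((L:ℝ) * ∑ k ∈ Icc 2 L,
        2 * (γ k)^2 / (∑ n ∈ Icc 1 (k-1), (γ n)^2))
        = ((L:ℝ)/S) * ∑ k ∈ Icc 2 L, 2 * (γ k)^2 / (∑ n ∈ Icc 1 (k-1), (γ n)^2) := by
      ring
    rw [h1]
    have hinnernn : 0 ≤ ∑ k ∈ Icc 2 L, 2 * (γ k)^2 / (∑ n ∈ Icc 1 (k-1), (γ n)^2) := by
      apply Finset.sum_nonneg
      intro k hk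
      rw [Finset.mem_Icc] at hk
      have hD : (0:ℝ) ≤ ∑ n ∈ Icc 1 (k-1), (γ n)^2 :=
        Finset.sum_nonneg (fun n _ => sq_nonneg _)
      positivity
    calc ((L:ℝ)/S) * ∑ k ∈ Icc 2 L, 2 * (γ k)^2 / (∑ n ∈ Icc 1 (k-1), (γ n)^2)
        ≤ (1/γmin^2) * ∑ k ∈ Icc 2 L, 2 * (γ k)^2 / (∑ n ∈ Icc 1 (k-1), (γ n)^2) :=
          mul_le_mul_of_nonneg_right hLS hinnernn
      _ ≤ (1/γmin^2) * ((2*γmax^2/γmin^2) * (1 + Real.log ((L:ℝ)-1))) :=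
          mul_le_mul_of_nonneg_left hinner (by positivity)
  have hRHS : (2 / γmin ^ 2) * (1 + (γmax ^ 2 / γmin ^ 2) * (1 + Real.log ((L : ℝ) - 1)))
      = 2/γmin^2 + (1/γmin^2) * ((2*γmax^2/γmin^2) * (1 + Real.log ((L:ℝ)-1))) := by
    field_simp
  rw [hRHS]
  exact add_le_add hfirst hsecond
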